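/- Greedy guarantee for monotone submodular maximization: if F : Finset V → ℝ is monotone (F(S) ≤ F(T) for S ⊆ T), submodular (F(S ∪ {v}) − F(S) ≥ F(T ∪ {v}) − F(T) for S ⊆ T, v ∉ T), and F(∅) = 0, then the greedy algorithm selecting m elements (each maximizing the marginal gain) produces a set G with F(G) ≥ (1 − (1 − 1/m)^m)·max_{|S| ≤ m} F(S) ≥ (1 − 1/e)·max_{|S| ≤ m} F(S). -/

import Mathlib

/-- Marginal gains bound the union gain, by submodularity. -/
lemma submod_sum_bound {V : Type*} [DecidableEq V]
    (F : Finset V → ℝ)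
    (hmono : ∀ S T : Finset V, S ⊆ T → F S ≤ F T)
    (hsub : ∀ S T : Finset V, S ⊆ T → ∀ v ∉ T,
      F (insert v T) - F T ≤ F (insert v S) - F S)
    (T A : Finset V) :
    F (T ∪ A) - F T ≤ ∑ v ∈ A, (F (insert v T) - F T) := by
  induction A using Finset.induction_on with
  | empty => simp
  | @insert a s ha ih =>
    rw [Finset.sum_insert ha]
    have hstep : F (T ∪ insert a s) - F (T ∪ s) ≤ F (insert a T) - F T := by
      have hins : T ∪ insert a s = insert a (T ∪ s) := by
        ext x; simp [or_comm, or_left_comm]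
      rw [hins]
      by_cases hmem : a ∈ T ∪ s
      · rw [Finset.insert_eq_self.mpr hmem]
        have := hmono T (insert a T) (Finset.subset_insert _ _)
        linarith
      · exact hsub T (T ∪ s) Finset.subset_union_left a hmem
    linarith

/-- Greedy guarantee for monotone submodular maximization.
If `F` is monotone, submodular, `F ∅ = 0`, and `G` is a greedy sequence
(starting from `∅`, each step inserting an element maximizing the marginal
gain), then for every set `S` with `|S| ≤ m`,
`F (G m) ≥ (1 − (1 − 1/m)^m)·F S ≥ (1 − 1/e)·F S`. -/
theorem stmt9 {V : Type*} [Fintype V] [DecidableEq V]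
    (F : Finset V → ℝ)
    (hmono : ∀ S T : Finset V, S ⊆ T → F S ≤ F T)
    (hsub : ∀ S T : Finset V, S ⊆ T → ∀ v ∉ T,
      F (insert v T) - F T ≤ F (insert v S) - F S)
    (h0 : F ∅ = 0)
    (m : ℕ) (hm : 0 < m)
    (G : ℕ → Finset V) (hG0 : G 0 = ∅)
    (hgreedy : ∀ k < m, ∃ v : V, G (k + 1) = insert v (G k) ∧
      ∀ u : V, F (insert u (G k)) - F (G k) ≤ F (insert v (G k)) - F (G k)) :
    ∀ S : Finset V, S.card ≤ m →
      (1 - (1 - 1 / (m : ℝ)) ^ m) * F S ≤ F (G m) ∧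
      (1 - Real.exp (-1)) * F S ≤ F (G m) := by
  intro S hS
  have hm' : (0 : ℝ) < m := by exact_mod_cast hm
  have hm1 : (1 : ℝ) ≤ m := by exact_mod_cast hm
  have hratio : (0 : ℝ) ≤ 1 - 1 / m := by
    have : (1 : ℝ) / m ≤ 1 := by
      rw [div_le_one hm']; exact hm1
    linarith
  have hFS : 0 ≤ F S := by
    have := hmono ∅ S (Finset.empty_subset S); linarith
  -- one-step recurrence
  have key : ∀ k, k < m →
      F S - F (G (k + 1)) ≤ (1 - 1 / (m : ℝ)) * (F S - F (G k)) := by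
    intro k hk
    obtain ⟨v, hv, hbest⟩ := hgreedy k hk
    have hδ : 0 ≤ F (G (k + 1)) - F (G k) := by
      rw [hv]
      have := hmono (G k) (insert v (G k)) (Finset.subset_insert _ _)
      linarith
    have h1 : F S ≤ F (G k ∪ S) := hmono _ _ Finset.subset_union_right
    have hsum := submod_sum_bound F hmono hsub (G k) S
    have h2 : ∑ u ∈ S, (F (insert u (G k)) - F (G k)) ≤
        (S.card : ℝ) * (F (G (k + 1)) - F (G k)) := by
      rw [hv]
      have := Finset.sum_le_card_nsmul S (fun u => F (insert u (G k)) - F (G k))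
        (F (insert v (G k)) - F (G k)) (fun u _ => hbest u)
      simpa [nsmul_eq_mul] using this
    have h3 : (S.card : ℝ) * (F (G (k + 1)) - F (G k)) ≤
        (m : ℝ) * (F (G (k + 1)) - F (G k)) := by
      apply mul_le_mul_of_nonneg_right _ hδ
      exact_mod_cast hS
    have hmain : F S - F (G k) ≤ (m : ℝ) * (F (G (k + 1)) - F (G k)) := by
      linarith
    have heq : (1 - 1 / (m : ℝ)) * (F S - F (G k)) =
        ((m : ℝ) * (F S - F (G k)) - (F S - F (G k))) / m := by
      field_simp
    rw [heq, le_div_iff₀ hm']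
    nlinarith [hmain]
  -- iterate
  have iter : ∀ k, k ≤ m → F S - F (G k) ≤ (1 - 1 / (m : ℝ)) ^ k * F S := by
    intro k
    induction k with
    | zero => intro _; simp [hG0, h0]
    | succ n ih =>
      intro hn
      have hn' : n < m := Nat.lt_of_succ_le hn
      have h1 := key n hn'
      have h2 := ih (Nat.le_of_lt hn')
      calc F S - F (G (n + 1)) ≤ (1 - 1 / (m : ℝ)) * (F S - F (G n)) := h1
        _ ≤ (1 - 1 / (m : ℝ)) * ((1 - 1 / (m : ℝ)) ^ n * F S) :=
            mul_le_mul_of_nonneg_left h2 hratio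
        _ = (1 - 1 / (m : ℝ)) ^ (n + 1) * F S := by ring
  have hfin := iter m le_rfl
  have goal1 : (1 - (1 - 1 / (m : ℝ)) ^ m) * F S ≤ F (G m) := by
    nlinarith [hfin]
  refine ⟨goal1, ?_⟩
  have hexp : (1 - 1 / (m : ℝ)) ^ m ≤ Real.exp (-1) := by
    have h2 : 1 - 1 / (m : ℝ) ≤ Real.exp (-(1 / m)) := by
      have := Real.add_one_le_exp (-(1 / (m : ℝ))); linarith
    calc (1 - 1 / (m : ℝ)) ^ m ≤ Real.exp (-(1 / m)) ^ m :=
          pow_le_pow_left₀ hratio h2 m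
      _ = Real.exp (-1) := by
          rw [← Real.exp_nat_mul]
          congr 1
          field_simp
  have : (1 - Real.exp (-1)) * F S ≤ (1 - (1 - 1 / (m : ℝ)) ^ m) * F S :=
    mul_le_mul_of_nonneg_right (by linarith) hFS
  linarith
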